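/- Let ω be a majorant satisfying ∫_0^δ ω(t)/t dt ≤ M ω(δ) for all sufficiently small δ > 0 and some constant M > 0, and let G be a proper subdomain of the plane such that each pair of points z, w ∈ G can be joined by a rectifiable curve γ ⊂ G with ∫_γ ω(d_G(ζ))/d_G(ζ) ds(ζ) ≤ C ω(|z−w|) for a fixed constant C = C(G,ω) > 0, where ds is arc length. If f is a real harmonic function in G that extends continuously to the boundary ∂G, then the following are equivalent: (i) f ∈ L_ω(G); (ii) |f| ∈ L_ω(G); (iii) |f| ∈ L_ω(G, ∂G). -/

import Mathlib

open MeasureTheory Metric Set Real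
open scoped ENNReal

/-- A real-valued function on `ℂ ≅ ℝ²` is harmonic on a set: it is `C²` there and
its Laplacian `u_xx + u_yy` vanishes. -/
def IsHarmonicOnR (u : ℂ → ℝ) (s : Set ℂ) : Prop :=
  ContDiffOn ℝ 2 u s ∧ ∀ z ∈ s,
    fderiv ℝ (fun w => fderiv ℝ u w 1) z 1
      + fderiv ℝ (fun w => fderiv ℝ u w Complex.I) z Complex.I = 0

/-- `|∇u(z)|`: the Euclidean norm of the gradient `(u_x, u_y)` of a real-valued
function `u` on `ℂ ≅ ℝ²`. -/
noncomputable def gradNorm (u : ℂ → ℝ) (z : ℂ) : ℝ :=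
  Real.sqrt ((fderiv ℝ u z 1) ^ 2 + (fderiv ℝ u z Complex.I) ^ 2)

/-- A majorant: a continuous increasing function `ω : [0,∞) → [0,∞)` with
`ω 0 = 0` such that `ω t / t` is non-increasing for `t > 0`. -/
def IsMajorant (ω : ℝ → ℝ) : Prop :=
  ContinuousOn ω (Ici 0) ∧ MonotoneOn ω (Ici 0) ∧ ω 0 = 0 ∧
    ∀ s t : ℝ, 0 < s → s ≤ t → ω t / t ≤ ω s / s

noncomputable def gradC (u : ℂ → ℝ) (y : ℂ) : ℂ :=
  ((fderiv ℝ u y 1 : ℝ) : ℂ) - ((fderiv ℝ u y Complex.I : ℝ) : ℂ) * Complex.I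

lemma gradC_mul_re (u : ℂ → ℝ) (y v : ℂ) :
    (gradC u y * v).re = fderiv ℝ u y v := by
  have hv : v = v.re • (1 : ℂ) + v.im • Complex.I := by
    apply Complex.ext <;> simp
  have h2 : fderiv ℝ u y v = v.re * fderiv ℝ u y 1 + v.im * fderiv ℝ u y Complex.I := by
    conv_lhs => rw [hv]
    rw [map_add, _root_.map_smul, _root_.map_smul]
    simp [smul_eq_mul]
  rw [h2]
  simp [gradC, Complex.mul_re, Complex.sub_re, Complex.sub_im, Complex.mul_im]
  ring

lemma norm_gradC (u : ℂ → ℝ) (y : ℂ) : ‖gradC u y‖ = gradNorm u y := by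
  rw [Complex.norm_def, Complex.normSq_apply, gradNorm]
  congr 1
  simp [gradC]
  ring

lemma fderiv_le_gradNorm (u : ℂ → ℝ) (y v : ℂ) :
    |fderiv ℝ u y v| ≤ gradNorm u y * ‖v‖ := by
  rw [← gradC_mul_re, ← norm_gradC]
  calc |(gradC u y * v).re| ≤ ‖gradC u y * v‖ := Complex.abs_re_le_norm _
    _ = ‖gradC u y‖ * ‖v‖ := by rw [norm_mul]

lemma gradC_differentiableAt {u : ℂ → ℝ} {G : Set ℂ} (hGopen : IsOpen G)
    (hu : IsHarmonicOnR u G) {z : ℂ} (hz : z ∈ G) :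
    DifferentiableAt ℂ (gradC u) z := by
  have hCD : ContDiffAt ℝ 2 u z := hu.1.contDiffAt (hGopen.mem_nhds hz)
  have hA : DifferentiableAt ℝ (fderiv ℝ u) z :=
    (hCD.fderiv_right (m := 1) (by norm_num)).differentiableAt one_ne_zero
  set A := fderiv ℝ (fderiv ℝ u) z with hAdef
  have hev : ∀ᶠ y in nhds z, HasFDerivAt u (fderiv ℝ u y) y := by
    filter_upwards [hGopen.mem_nhds hz] with y hy
    exact (((hu.1.differentiableOn (by norm_num)) y hy).differentiableAt
      (hGopen.mem_nhds hy)).hasFDerivAt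
  have hsymm : A Complex.I 1 = A 1 Complex.I :=
    second_derivative_symmetric_of_eventually hev hA.hasFDerivAt Complex.I 1
  have hD1 : ∀ v : ℂ, HasFDerivAt (fun w => fderiv ℝ u w v)
      ((ContinuousLinearMap.apply ℝ ℝ v).comp A) z :=
    fun v => (ContinuousLinearMap.apply ℝ ℝ v).hasFDerivAt.comp z hA.hasFDerivAt
  have hharm : A Complex.I Complex.I = -(A 1 1) := by
    have h1 := (hD1 1).fderiv
    have h2 := (hD1 Complex.I).fderiv
    have h0 := hu.2 z hz
    rw [h1, h2] at h0
    simp only [ContinuousLinearMap.comp_apply, ContinuousLinearMap.apply_apply] at h0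
    linarith
  set c : ℂ := ((A 1 1 : ℝ) : ℂ) - ((A 1 Complex.I : ℝ) : ℂ) * Complex.I with hc
  have h1 : HasFDerivAt (fun w => ((fderiv ℝ u w 1 : ℝ) : ℂ))
      (Complex.ofRealCLM.comp ((ContinuousLinearMap.apply ℝ ℝ 1).comp A)) z :=
    Complex.ofRealCLM.hasFDerivAt.comp z (hD1 1)
  have h2 : HasFDerivAt (fun w => ((fderiv ℝ u w Complex.I : ℝ) : ℂ) * Complex.I)
      (Complex.I • (Complex.ofRealCLM.comp ((ContinuousLinearMap.apply ℝ ℝ Complex.I).comp A))) z :=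
    (Complex.ofRealCLM.hasFDerivAt.comp z (hD1 Complex.I)).mul_const Complex.I
  have hg : HasFDerivAt (gradC u)
      ((Complex.ofRealCLM.comp ((ContinuousLinearMap.apply ℝ ℝ 1).comp A)) -
        Complex.I • (Complex.ofRealCLM.comp ((ContinuousLinearMap.apply ℝ ℝ Complex.I).comp A))) z := by
    exact h1.sub h2
  refine (differentiableAt_iff_restrictScalars ℝ hg.differentiableAt).2
    ⟨c • ContinuousLinearMap.id ℂ ℂ, ?_⟩
  rw [hg.fderiv]
  ext h
  have hh : h = h.re • (1 : ℂ) + h.im • Complex.I := by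
    apply Complex.ext <;> simp
  have hAh : A h = h.re • A 1 + h.im • A Complex.I := by
    conv_lhs => rw [hh, map_add, _root_.map_smul, _root_.map_smul]
  simp only [ContinuousLinearMap.coe_restrictScalars', ContinuousLinearMap.smul_apply,
    ContinuousLinearMap.coe_id', id_eq, ContinuousLinearMap.coe_sub',
    Pi.sub_apply, ContinuousLinearMap.coe_comp', Function.comp_apply,
    ContinuousLinearMap.smulRight_apply, Complex.ofRealCLM_apply,
    ContinuousLinearMap.apply_apply, smul_eq_mul]
  rw [hAh]
  simp only [ContinuousLinearMap.add_apply, ContinuousLinearMap.coe_smul',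
    Pi.smul_apply, smul_eq_mul]
  rw [hsymm, hharm, hc]
  apply Complex.ext <;> simp <;> ring

lemma gradC_bound {u : ℂ → ℝ} {z : ℂ} {R r c B : ℝ}
    (hr : 0 < r) (hrR : r < R)
    (hu2 : ContDiffOn ℝ 2 u (ball z R))
    (hg : ∀ y ∈ ball z R, DifferentiableAt ℂ (gradC u) y)
    (hB : ∀ y ∈ sphere z r, |u y - c| ≤ B) :
    ‖gradC u z‖ ≤ 2 * B / r := by
  have hsub : sphere z r ⊆ ball z R := fun y hy => by
    rw [mem_sphere] at hy; rw [mem_ball, hy]; exact hrR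
  have hsubc : closedBall z r ⊆ ball z R := closedBall_subset_ball hrR
  have hudiff : ∀ y ∈ ball z R, DifferentiableAt ℝ u y := fun y hy =>
    ((hu2.differentiableOn (by norm_num)) y hy).differentiableAt
      (isOpen_ball.mem_nhds hy)
  set γ : ℝ → ℂ := circleMap z r with hγ
  have hγmem : ∀ θ : ℝ, γ θ ∈ ball z R := fun θ => hsub (circleMap_mem_sphere z hr.le θ)
  -- continuity facts
  have hgcont : Continuous fun θ => gradC u (γ θ) :=
    continuous_iff_continuousAt.2 fun θ =>
      ((hg _ (hγmem θ)).continuousAt).comp (continuous_circleMap z r).continuousAt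
  have hucont : Continuous fun θ => u (γ θ) :=
    continuous_iff_continuousAt.2 fun θ =>
      ((hudiff _ (hγmem θ)).continuousAt).comp (continuous_circleMap z r).continuousAt
  have hexpcont : Continuous fun θ : ℝ => Complex.exp (-(θ : ℂ) * Complex.I) :=
    Complex.continuous_exp.comp (by continuity)
  -- the derivative of P
  set P : ℝ → ℂ := fun θ => (u (γ θ) : ℂ) * Complex.exp (-(θ : ℂ) * Complex.I) with hP
  set P' : ℝ → ℂ := fun θ =>
    ((gradC u (γ θ) * (circleMap 0 r θ * Complex.I)).re : ℂ)
        * Complex.exp (-(θ : ℂ) * Complex.I)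
      + (u (γ θ) : ℂ) * (Complex.exp (-(θ : ℂ) * Complex.I) * -Complex.I) with hP'
  have hPderiv : ∀ θ : ℝ, HasDerivAt P (P' θ) θ := by
    intro θ
    have ha0 : HasDerivAt (fun t => u (γ t))
        (fderiv ℝ u (γ θ) (circleMap 0 r θ * Complex.I)) θ :=
      (hudiff _ (hγmem θ)).hasFDerivAt.comp_hasDerivAt θ (hasDerivAt_circleMap z r θ)
    have ha : HasDerivAt (fun t => (u (γ t) : ℂ))
        (((gradC u (γ θ) * (circleMap 0 r θ * Complex.I)).re : ℂ)) θ := by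
      rw [gradC_mul_re]
      exact ha0.ofReal_comp
    have hlin0 : HasDerivAt (fun t : ℝ => ((t : ℂ))) 1 θ := by
      simpa using (hasDerivAt_id θ).ofReal_comp
    have hlin : HasDerivAt (fun t : ℝ => -(t : ℂ) * Complex.I) (-Complex.I) θ := by
      simpa using (hlin0.neg).mul_const Complex.I
    have hb : HasDerivAt (fun t : ℝ => Complex.exp (-(t : ℂ) * Complex.I))
        (Complex.exp (-(θ : ℂ) * Complex.I) * -Complex.I) θ := hlin.cexp
    exact ha.mul hb
  have hP'cont : Continuous P' := by
    apply Continuous.add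
    · exact (Complex.continuous_ofReal.comp
        ((Complex.continuous_re.comp (hgcont.mul
          ((continuous_circleMap 0 r).mul continuous_const))))).mul hexpcont
    · exact (Complex.continuous_ofReal.comp hucont).mul (hexpcont.mul continuous_const)
  have hFTC : ∫ θ in (0:ℝ)..(2 * π), P' θ = 0 := by
    rw [intervalIntegral.integral_eq_sub_of_hasDerivAt (fun θ _ => hPderiv θ)
      (hP'cont.intervalIntegrable 0 (2 * π))]
    have h1 : γ (2 * π) = γ 0 := by
      simpa using (periodic_circleMap z r) 0
    have h2 : Complex.exp (-(((2:ℝ) * π : ℝ) : ℂ) * Complex.I) = 1 := by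
      rw [show (-(((2:ℝ) * π : ℝ) : ℂ) * Complex.I) = -(2 * π * Complex.I) by push_cast; ring,
        Complex.exp_neg, Complex.exp_two_pi_mul_I, inv_one]
    simp only [hP, h1]
    rw [show (-(((2:ℝ) * π : ℝ) : ℂ) * Complex.I) = -(2 * π * Complex.I) by push_cast; ring,
      Complex.exp_neg, Complex.exp_two_pi_mul_I, inv_one]
    simp
  -- Cauchy mean value: ∫ g(γθ) dθ = 2π g z
  have hDC : DiffContOnCl ℂ (gradC u) (ball z r) := by
    refine ⟨fun y hy => (hg y (ball_subset_ball hrR.le hy)).differentiableWithinAt, ?_⟩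
    rw [closure_ball z hr.ne']
    exact fun y hy => ((hg y (hsubc hy)).continuousAt).continuousWithinAt
  have hcau := hDC.circleIntegral_sub_inv_smul (mem_ball_self hr)
  have hmean : ∫ θ in (0:ℝ)..(2 * π), gradC u (γ θ) = 2 * π * gradC u z := by
    have h1 : (∮ ζ in C(z, r), (ζ - z)⁻¹ • gradC u ζ)
        = ∫ θ in (0:ℝ)..(2 * π), Complex.I * gradC u (γ θ) := by
      rw [circleIntegral]
      congr 1; funext θ
      have hne : circleMap 0 r θ ≠ 0 := circleMap_ne_center hr.ne'
      rw [deriv_circleMap, circleMap_sub_center, smul_eq_mul, smul_eq_mul]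
      field_simp
      ring
    rw [h1, intervalIntegral.integral_const_mul, smul_eq_mul] at hcau
    apply mul_left_cancel₀ Complex.I_ne_zero
    rw [hcau]; ring
  -- Cauchy-Goursat: ∫ Q = 0
  have hQ : (∫ θ in (0:ℝ)..(2 * π), gradC u (γ θ) * (circleMap 0 r θ * Complex.I)
      * Complex.exp ((θ:ℂ) * Complex.I)) = 0 := by
    have hgour : (∮ ζ in C(z, r), gradC u ζ * (ζ - z)) = 0 := by
      apply Complex.circleIntegral_eq_zero_of_differentiable_on_off_countable hr.le Set.countable_empty
      · exact fun y hy => (((hg y (hsubc hy)).continuousAt).mul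
          ((continuous_id.sub continuous_const).continuousAt)).continuousWithinAt
      · exact fun y hy => (hg y (ball_subset_ball hrR.le hy.1)).mul
          ((differentiableAt_id).sub (differentiableAt_const z))
    have h1 : (∮ ζ in C(z, r), gradC u ζ * (ζ - z))
        = ∫ θ in (0:ℝ)..(2 * π), (r:ℂ) * (gradC u (γ θ) * (circleMap 0 r θ * Complex.I)
            * Complex.exp ((θ:ℂ) * Complex.I)) := by
      rw [circleIntegral]
      congr 1; funext θ
      rw [deriv_circleMap, circleMap_sub_center, smul_eq_mul]
      simp only [circleMap, zero_add, hγ]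
      ring
    rw [h1, intervalIntegral.integral_const_mul] at hgour
    exact (mul_eq_zero.1 hgour).resolve_left (Complex.ofReal_ne_zero.2 hr.ne')
  -- the key pointwise identity
  set J : ℂ := ∫ θ in (0:ℝ)..(2 * π), (u (γ θ) : ℂ) * Complex.exp (-(θ:ℂ) * Complex.I) with hJdef
  have hkey : ∀ θ : ℝ, ((gradC u (γ θ) * (circleMap 0 r θ * Complex.I)).re : ℂ)
        * Complex.exp (-(θ:ℂ) * Complex.I)
      = (r * Complex.I / 2) * gradC u (γ θ)
        + (1/2) * (starRingEnd ℂ) (gradC u (γ θ) * (circleMap 0 r θ * Complex.I)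
            * Complex.exp ((θ:ℂ) * Complex.I)) := by
    intro θ
    set w := gradC u (γ θ) * (circleMap 0 r θ * Complex.I) with hw
    have hre : ((w).re : ℂ) = (w + (starRingEnd ℂ) w) / 2 := by
      rw [Complex.add_conj]; push_cast; ring
    have hconjexp : (starRingEnd ℂ) (Complex.exp ((θ:ℂ) * Complex.I))
        = Complex.exp (-(θ:ℂ) * Complex.I) := by
      rw [← Complex.exp_conj]; congr 1
      simp [Complex.conj_I]
    have hcan : circleMap 0 r θ * Complex.exp (-(θ:ℂ) * Complex.I) = (r:ℂ) := by
      simp only [circleMap, zero_add]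
      rw [mul_assoc, ← Complex.exp_add,
        show (θ:ℂ) * Complex.I + -(θ:ℂ) * Complex.I = 0 by ring, Complex.exp_zero, mul_one]
    have hwe : w * Complex.exp (-(θ:ℂ) * Complex.I) = (r:ℂ) * Complex.I * gradC u (γ θ) := by
      rw [hw]
      linear_combination gradC u (γ θ) * Complex.I * hcan
    rw [hre, show (starRingEnd ℂ) (w * Complex.exp ((θ:ℂ) * Complex.I))
      = (starRingEnd ℂ) w * Complex.exp (-(θ:ℂ) * Complex.I) by rw [map_mul, hconjexp]]
    linear_combination (1/2 : ℂ) * hwe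
  -- compute J
  have hcont1 : Continuous fun θ => (r * Complex.I / 2) * gradC u (γ θ) :=
    continuous_const.mul hgcont
  have hQcont : Continuous fun θ : ℝ => gradC u (γ θ) * (circleMap 0 r θ * Complex.I)
      * Complex.exp ((θ:ℂ) * Complex.I) :=
    (hgcont.mul ((continuous_circleMap 0 r).mul continuous_const)).mul
      (Complex.continuous_exp.comp (by continuity))
  have hsplit : ∫ θ in (0:ℝ)..(2 * π), P' θ
      = (∫ θ in (0:ℝ)..(2 * π), ((gradC u (γ θ) * (circleMap 0 r θ * Complex.I)).re : ℂ)
          * Complex.exp (-(θ:ℂ) * Complex.I))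
        + ∫ θ in (0:ℝ)..(2 * π), (u (γ θ) : ℂ)
            * (Complex.exp (-(θ:ℂ) * Complex.I) * -Complex.I) :=
    intervalIntegral.integral_add
      (((Complex.continuous_ofReal.comp
        ((Complex.continuous_re.comp (hgcont.mul
          ((continuous_circleMap 0 r).mul continuous_const))))).mul
            hexpcont).intervalIntegrable _ _)
      (((Complex.continuous_ofReal.comp hucont).mul
        (hexpcont.mul continuous_const)).intervalIntegrable _ _)
  have h2nd : (∫ θ in (0:ℝ)..(2 * π), (u (γ θ) : ℂ)
      * (Complex.exp (-(θ:ℂ) * Complex.I) * -Complex.I)) = -Complex.I * J := by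
    rw [hJdef, ← intervalIntegral.integral_const_mul]
    congr 1; funext θ; ring
  have hconjint : (∫ θ in (0:ℝ)..(2 * π), (starRingEnd ℂ) (gradC u (γ θ)
        * (circleMap 0 r θ * Complex.I) * Complex.exp ((θ:ℂ) * Complex.I)))
      = (starRingEnd ℂ) (∫ θ in (0:ℝ)..(2 * π), gradC u (γ θ)
          * (circleMap 0 r θ * Complex.I) * Complex.exp ((θ:ℂ) * Complex.I)) := by
    rw [intervalIntegral.integral_of_le (by positivity),
      intervalIntegral.integral_of_le (by positivity), integral_conj]
  have hfirst : (∫ θ in (0:ℝ)..(2 * π), ((gradC u (γ θ)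
        * (circleMap 0 r θ * Complex.I)).re : ℂ) * Complex.exp (-(θ:ℂ) * Complex.I))
      = (r * Complex.I / 2) * (2 * π * gradC u z) := by
    rw [intervalIntegral.integral_congr (g := fun θ => (r * Complex.I / 2) * gradC u (γ θ)
      + (1/2) * (starRingEnd ℂ) (gradC u (γ θ) * (circleMap 0 r θ * Complex.I)
        * Complex.exp ((θ:ℂ) * Complex.I))) (fun θ _ => hkey θ)]
    have hi1 : IntervalIntegrable (fun θ : ℝ => (r:ℂ) * Complex.I / 2 * gradC u (γ θ))
        volume 0 (2 * π) := hcont1.intervalIntegrable _ _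
    have hi2 : IntervalIntegrable (fun θ : ℝ => 1 / 2 * (starRingEnd ℂ) (gradC u (γ θ)
        * (circleMap 0 r θ * Complex.I) * Complex.exp ((θ:ℂ) * Complex.I)))
        volume 0 (2 * π) :=
      (continuous_const.mul (Complex.continuous_conj.comp hQcont)).intervalIntegrable _ _
    rw [intervalIntegral.integral_add hi1 hi2]
    rw [intervalIntegral.integral_const_mul, intervalIntegral.integral_const_mul,
      hconjint, hQ, hmean]
    simp
  have hJ : J = (π : ℂ) * r * gradC u z := by
    have h0 := hFTC
    rw [hsplit, hfirst, h2nd] at h0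
    have h1 : -Complex.I * J = -Complex.I * ((π : ℂ) * r * gradC u z) := by
      linear_combination h0
    exact mul_left_cancel₀ (neg_ne_zero.2 Complex.I_ne_zero) h1
  -- ∫ e^{-iθ} = 0
  have hzero : (∫ θ in (0:ℝ)..(2 * π), Complex.exp (-(θ:ℂ) * Complex.I)) = 0 := by
    rw [intervalIntegral.integral_congr
      (g := fun θ : ℝ => Complex.exp (-Complex.I * (θ : ℝ)))
      (fun θ _ => by ring_nf)]
    rw [integral_exp_mul_complex (by simpa using Complex.I_ne_zero)]
    rw [show -Complex.I * (((2:ℝ) * π : ℝ) : ℂ) = -(2 * π * Complex.I) by push_cast; ring,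
      Complex.exp_neg, Complex.exp_two_pi_mul_I, inv_one]
    simp
  have hJ2 : J = ∫ θ in (0:ℝ)..(2 * π), ((u (γ θ) - c : ℝ) : ℂ)
      * Complex.exp (-(θ:ℂ) * Complex.I) := by
    have heq : (fun θ : ℝ => ((u (γ θ) - c : ℝ) : ℂ) * Complex.exp (-(θ:ℂ) * Complex.I))
        = fun θ : ℝ => (u (γ θ) : ℂ) * Complex.exp (-(θ:ℂ) * Complex.I)
          - (c : ℂ) * Complex.exp (-(θ:ℂ) * Complex.I) := by
      funext θ; push_cast; ring
    have hi1 : IntervalIntegrable (fun θ : ℝ => (u (γ θ) : ℂ)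
        * Complex.exp (-(θ:ℂ) * Complex.I)) volume 0 (2 * π) :=
      ((Complex.continuous_ofReal.comp hucont).mul hexpcont).intervalIntegrable _ _
    have hi2 : IntervalIntegrable (fun θ : ℝ => (c:ℂ)
        * Complex.exp (-(θ:ℂ) * Complex.I)) volume 0 (2 * π) :=
      (continuous_const.mul hexpcont).intervalIntegrable _ _
    rw [heq, intervalIntegral.integral_sub hi1 hi2,
      intervalIntegral.integral_const_mul, hzero, mul_zero, sub_zero, hJdef]
  have hnormJ : ‖J‖ ≤ 2 * π * B := by
    rw [hJ2]
    have hb1 : ‖∫ θ in (0:ℝ)..(2 * π), ((u (γ θ) - c : ℝ) : ℂ)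
          * Complex.exp (-(θ:ℂ) * Complex.I)‖
        ≤ ∫ θ in (0:ℝ)..(2 * π), ‖((u (γ θ) - c : ℝ) : ℂ)
          * Complex.exp (-(θ:ℂ) * Complex.I)‖ :=
      intervalIntegral.norm_integral_le_integral_norm (by positivity)
    have hb2 : ∀ θ : ℝ, ‖((u (γ θ) - c : ℝ) : ℂ) * Complex.exp (-(θ:ℂ) * Complex.I)‖
        = |u (γ θ) - c| := by
      intro θ
      rw [norm_mul, show -(θ:ℂ) * Complex.I = (((-θ : ℝ)) : ℂ) * Complex.I by push_cast; ring,
        Complex.norm_exp_ofReal_mul_I, mul_one, Complex.norm_real, Real.norm_eq_abs]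
    rw [intervalIntegral.integral_congr (g := fun θ => |u (γ θ) - c|)
      (fun θ _ => hb2 θ)] at hb1
    refine hb1.trans ?_
    have hb3 : (∫ θ in (0:ℝ)..(2 * π), |u (γ θ) - c|) ≤ ∫ _ in (0:ℝ)..(2 * π), B := by
      apply intervalIntegral.integral_mono_on (by positivity)
      · exact ((hucont.sub continuous_const).abs).intervalIntegrable _ _
      · exact intervalIntegrable_const
      · exact fun θ _ => hB _ (circleMap_mem_sphere z hr.le θ)
    simpa using hb3
  have hfin : π * r * ‖gradC u z‖ ≤ 2 * π * B := by
    have : ‖J‖ = π * r * ‖gradC u z‖ := by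
      rw [hJ, norm_mul, norm_mul]
      simp [_root_.abs_of_nonneg pi_pos.le, _root_.abs_of_nonneg hr.le]
    rw [← this]; exact hnormJ
  rw [le_div_iff₀ hr]
  nlinarith [pi_pos, hfin]

lemma frontier_nonempty {G : Set ℂ} (hGne : G.Nonempty) (hGproper : G ≠ univ) :
    (frontier G).Nonempty :=
  nonempty_frontier_iff.mpr ⟨hGne, hGproper⟩

lemma infDist_frontier_pos {G : Set ℂ} (hGopen : IsOpen G) (hGne : G.Nonempty)
    (hGproper : G ≠ univ) {z : ℂ} (hz : z ∈ G) : 0 < infDist z (frontier G) := by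
  rw [← isClosed_frontier.notMem_iff_infDist_pos (frontier_nonempty hGne hGproper)]
  intro hzf
  have := hGopen.inter_frontier_eq (s := G)
  exact absurd (mem_inter hz hzf) (by rw [this]; exact notMem_empty z)

lemma ball_infDist_subset {G : Set ℂ} (hGopen : IsOpen G) (hGne : G.Nonempty)
    (hGproper : G ≠ univ) {z : ℂ} (hz : z ∈ G) :
    ball z (infDist z (frontier G)) ⊆ G := by
  set d := infDist z (frontier G) with hd
  have hd0 : 0 < d := infDist_frontier_pos hGopen hGne hGproper hz
  intro y hy
  by_contra hyG
  have hseg : segment ℝ z y ⊆ ball z d :=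
    (convex_ball z d).segment_subset (mem_ball_self hd0) hy
  have hfr : (segment ℝ z y ∩ frontier G).Nonempty := by
    by_contra hno
    rw [not_nonempty_iff_eq_empty] at hno
    have hsub : segment ℝ z y ⊆ G ∪ (closure G)ᶜ := by
      intro p hp
      have hpf : p ∉ frontier G := fun hpf =>
        (notMem_empty p) (hno ▸ mem_inter hp hpf)
      rcases (em (p ∈ closure G)) with hpc | hpc
      · left
        rw [closure_eq_self_union_frontier] at hpc
        exact hpc.resolve_right hpf
      · right; exact hpc
    have := (convex_segment z y).isPreconnected
    rcases this G (closure G)ᶜ hGopen (isClosed_closure.isOpen_compl) hsub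
      ⟨z, left_mem_segment ℝ z y, hz⟩
      ⟨y, right_mem_segment ℝ z y, fun hyc => by
        rw [closure_eq_self_union_frontier] at hyc
        exact absurd (hyc.resolve_left hyG) (fun hyf =>
          (notMem_empty y) (hno ▸ mem_inter (right_mem_segment ℝ z y) hyf))⟩ with ⟨p, hp⟩
    exact hp.2.2 (subset_closure hp.2.1)
  obtain ⟨p, hps, hpf⟩ := hfr
  have h1 : dist z p < d := by
    have := hseg hps; rwa [mem_ball, dist_comm] at this
  have h2 : d ≤ dist z p := infDist_le_dist_of_mem hpf
  linarith

lemma grad_bound_of_boundary {ω : ℝ → ℝ} (hω : IsMajorant ω) {G : Set ℂ}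
    (hGopen : IsOpen G) (hGne : G.Nonempty) (hGproper : G ≠ univ)
    {f : ℂ → ℝ} (hf : IsHarmonicOnR f G) {K : ℝ} (hK : 0 < K)
    (hbd : ∀ z ∈ G, ∀ w ∈ frontier G, |(|f z| - |f w|)| ≤ K * ω (dist z w))
    {z : ℂ} (hz : z ∈ G) :
    gradNorm f z ≤ 16 * K * ω (infDist z (frontier G)) / infDist z (frontier G) := by
  obtain ⟨hωc, hωm, hω0, hωr⟩ := hω
  set d := infDist z (frontier G) with hd
  have hd0 : 0 < d := infDist_frontier_pos hGopen hGne hGproper hz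
  have hball : ball z d ⊆ G := ball_infDist_subset hGopen hGne hGproper hz
  have hcball : closedBall z (d/2) ⊆ G :=
    (closedBall_subset_ball (by linarith)).trans hball
  obtain ⟨w₀, hw₀f, hw₀d⟩ :=
    isClosed_frontier.exists_infDist_eq_dist (frontier_nonempty hGne hGproper) z
  have hωd0 : 0 ≤ ω d := by
    rw [← hω0]
    exact hωm (by simp) (mem_Ici.2 hd0.le) hd0.le
  have hω2d : ω (2 * d) ≤ 2 * ω d := by
    have h := hωr d (2 * d) hd0 (by linarith)
    rw [div_le_div_iff₀ (by linarith) hd0] at h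
    nlinarith
  -- bound on the closed ball
  have hyd : ∀ y ∈ closedBall z (d/2), |(|f y| - |f w₀|)| ≤ 2 * K * ω d := by
    intro y hy
    have hyG : y ∈ G := hcball hy
    have hdist : dist y w₀ ≤ 2 * d := by
      have h1 : dist y z ≤ d / 2 := mem_closedBall.1 hy
      have h2 : dist z w₀ = d := hw₀d.symm
      calc dist y w₀ ≤ dist y z + dist z w₀ := dist_triangle y z w₀
        _ ≤ 2 * d := by rw [h2]; linarith
    calc |(|f y| - |f w₀|)| ≤ K * ω (dist y w₀) := hbd y hyG w₀ hw₀f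
      _ ≤ K * ω (2 * d) := by
          apply mul_le_mul_of_nonneg_left _ hK.le
          exact hωm (mem_Ici.2 dist_nonneg) (mem_Ici.2 (by linarith)) hdist
      _ ≤ 2 * K * ω d := by nlinarith
  have hu2 : ContDiffOn ℝ 2 f (ball z d) := hf.1.mono hball
  have hgd : ∀ y ∈ ball z d, DifferentiableAt ℂ (gradC f) y := fun y hy =>
    gradC_differentiableAt hGopen hf (hball hy)
  have hfin : ∃ B c : ℝ, B ≤ 4 * K * ω d ∧ ∀ y ∈ sphere z (d/2), |f y - c| ≤ B := by
    by_cases hzero : ∃ ζ ∈ closedBall z (d/2), f ζ = 0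
    · obtain ⟨ζ, hζm, hζ0⟩ := hzero
      refine ⟨4 * K * ω d, 0, le_refl _, ?_⟩
      intro y hy
      have h1 : |f w₀| ≤ 2 * K * ω d := by
        have := hyd ζ hζm
        rw [hζ0] at this
        simpa using this
      have h2 := hyd y (sphere_subset_closedBall hy)
      rw [sub_zero]
      have h4 : |f y| ≤ |(|f y| - |f w₀|)| + |f w₀| := by
        simpa using abs_add_le (|f y| - |f w₀|) (|f w₀|)
      calc |f y| ≤ |(|f y| - |f w₀|)| + |f w₀| := h4
        _ ≤ 2 * K * ω d + 2 * K * ω d := add_le_add h2 h1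
        _ = 4 * K * ω d := by ring
    · push_neg at hzero
      have hfc : ContinuousOn f (closedBall z (d/2)) := hf.1.continuousOn.mono hcball
      have hsign : (∀ y ∈ closedBall z (d/2), 0 < f y) ∨
          (∀ y ∈ closedBall z (d/2), f y < 0) := by
        have hzmem : z ∈ closedBall z (d/2) := mem_closedBall_self (by linarith)
        rcases lt_or_gt_of_ne (hzero z hzmem) with hneg | hpos
        · right
          intro y hy
          rcases lt_or_gt_of_ne (hzero y hy) with h | h
          · exact h
          · exfalso
            have hiv := (convex_closedBall z (d/2)).isPreconnected.intermediate_value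
              hzmem hy hfc
            have : (0:ℝ) ∈ Icc (f z) (f y) := ⟨hneg.le, h.le⟩
            obtain ⟨ζ, hζm, hζ0⟩ := hiv this
            exact hzero ζ hζm hζ0
        · left
          intro y hy
          rcases lt_or_gt_of_ne (hzero y hy) with h | h
          · exfalso
            have hiv := (convex_closedBall z (d/2)).isPreconnected.intermediate_value
              hy hzmem hfc
            have : (0:ℝ) ∈ Icc (f y) (f z) := ⟨h.le, hpos.le⟩
            obtain ⟨ζ, hζm, hζ0⟩ := hiv this
            exact hzero ζ hζm hζ0
          · exact h
      rcases hsign with hpos | hneg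
      · refine ⟨2 * K * ω d, |f w₀|, by nlinarith, ?_⟩
        intro y hy
        have h2 := hyd y (sphere_subset_closedBall hy)
        rwa [abs_of_pos (hpos y (sphere_subset_closedBall hy))] at h2
      · refine ⟨2 * K * ω d, -|f w₀|, by nlinarith, ?_⟩
        intro y hy
        have h2 := hyd y (sphere_subset_closedBall hy)
        rw [abs_of_neg (hneg y (sphere_subset_closedBall hy))] at h2
        rw [show f y - -|f w₀| = -(-f y - |f w₀|) by ring, abs_neg]
        exact h2
  obtain ⟨B, c, hB4, hBs⟩ := hfin
  have hmain := gradC_bound (r := d/2) (R := d) (c := c) (B := B)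
    (by linarith) (by linarith) hu2 hgd hBs
  rw [norm_gradC] at hmain
  calc gradNorm f z ≤ 2 * B / (d/2) := hmain
    _ ≤ 16 * K * ω d / d := by
      rw [div_le_div_iff₀ (by linarith) hd0]
      nlinarith

/-- Theorem 2: let `ω` be a majorant satisfying
`∫₀^δ ω(t)/t dt ≤ M ω(δ)` for all small `δ > 0`, and let `G` be a proper subdomain of
the plane such that any two points `z, w ∈ G` are joined by a rectifiable curve
`γ ⊆ G` with `∫_γ ω(d_G(ζ))/d_G(ζ) ds(ζ) ≤ C ω(|z-w|)`. If `f` is real harmonic in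
`G` and continuous up to `∂G`, then `f ∈ L_ω(G) ↔ |f| ∈ L_ω(G) ↔ |f| ∈ L_ω(G, ∂G)`. -/
theorem stmt4 (ω : ℝ → ℝ) (hω : IsMajorant ω)
    (M : ℝ) (hM : 0 < M) (δ₀ : ℝ) (hδ₀ : 0 < δ₀)
    (hωint : ∀ δ : ℝ, 0 < δ → δ < δ₀ → (∫ t in (0:ℝ)..δ, ω t / t) ≤ M * ω δ)
    (G : Set ℂ) (hGopen : IsOpen G) (hGconn : IsConnected G) (hGproper : G ≠ univ)
    (C : ℝ) (hC : 0 < C)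
    (hcurve : ∀ z ∈ G, ∀ w ∈ G, ∃ γ : ℝ → ℂ,
      γ 0 = z ∧ γ 1 = w ∧ (∀ t ∈ Icc (0:ℝ) 1, γ t ∈ G) ∧
      ContDiffOn ℝ 1 γ (Icc (0:ℝ) 1) ∧
      (∫ t in (0:ℝ)..1,
          ω (infDist (γ t) (frontier G)) / infDist (γ t) (frontier G) * ‖deriv γ t‖)
        ≤ C * ω (dist z w))
    (f : ℂ → ℝ) (hf : IsHarmonicOnR f G) (hfc : ContinuousOn f (closure G)) :
    ((∃ K > (0 : ℝ), ∀ z ∈ G, ∀ w ∈ G, |f z - f w| ≤ K * ω (dist z w)) ↔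
      (∃ K > (0 : ℝ), ∀ z ∈ G, ∀ w ∈ G, abs (|f z| - |f w|) ≤ K * ω (dist z w))) ∧
    ((∃ K > (0 : ℝ), ∀ z ∈ G, ∀ w ∈ G, abs (|f z| - |f w|) ≤ K * ω (dist z w)) ↔
      (∃ K > (0 : ℝ), ∀ z ∈ G, ∀ w ∈ frontier G, abs (|f z| - |f w|) ≤ K * ω (dist z w))) := by
  have hGne : G.Nonempty := hGconn.nonempty
  -- (i) → (ii)
  have e1 : (∃ K > (0 : ℝ), ∀ z ∈ G, ∀ w ∈ G, |f z - f w| ≤ K * ω (dist z w)) →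
      (∃ K > (0 : ℝ), ∀ z ∈ G, ∀ w ∈ G, abs (|f z| - |f w|) ≤ K * ω (dist z w)) := by
    rintro ⟨K, hK, h⟩
    exact ⟨K, hK, fun z hz w hw =>
      (abs_abs_sub_abs_le_abs_sub (f z) (f w)).trans (h z hz w hw)⟩
  -- (ii) → (iii)
  have e2 : (∃ K > (0 : ℝ), ∀ z ∈ G, ∀ w ∈ G, abs (|f z| - |f w|) ≤ K * ω (dist z w)) →
      (∃ K > (0 : ℝ), ∀ z ∈ G, ∀ w ∈ frontier G, abs (|f z| - |f w|) ≤ K * ω (dist z w)) := by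
    rintro ⟨K, hK, h⟩
    refine ⟨K, hK, fun z hz w hw => ?_⟩
    have hwc : w ∈ closure G := by
      have := frontier_subset_closure (s := G)
      exact this hw
    obtain ⟨x, hxG, hxlim⟩ := mem_closure_iff_seq_limit.1 hwc
    have h1 : Filter.Tendsto (fun n => abs (|f z| - |f (x n)|)) Filter.atTop
        (nhds (abs (|f z| - |f w|))) := by
      have hfw : Filter.Tendsto (fun n => f (x n)) Filter.atTop (nhds (f w)) := by
        have hcw : ContinuousWithinAt f (closure G) w := hfc w hwc
        exact hcw.tendsto.comp (tendsto_nhdsWithin_iff.2 ⟨hxlim,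
          Filter.Eventually.of_forall fun n => subset_closure (hxG n)⟩)
      exact ((continuous_abs.tendsto _).comp ((tendsto_const_nhds).sub
        ((continuous_abs.tendsto _).comp hfw)))
    have h2 : Filter.Tendsto (fun n => K * ω (dist z (x n))) Filter.atTop
        (nhds (K * ω (dist z w))) := by
      have hd : Filter.Tendsto (fun n => dist z (x n)) Filter.atTop (nhds (dist z w)) :=
        ((continuous_const.dist continuous_id).tendsto w).comp hxlim
      have hωc : ContinuousWithinAt ω (Ici 0) (dist z w) := hω.1 _ (mem_Ici.2 dist_nonneg)
      have : Filter.Tendsto (fun n => ω (dist z (x n))) Filter.atTop (nhds (ω (dist z w))) := by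
        refine hωc.tendsto.comp (tendsto_nhdsWithin_iff.2 ⟨hd,
          Filter.Eventually.of_forall fun n => ?_⟩)
        exact mem_Ici.2 dist_nonneg
      exact this.const_mul K
    exact le_of_tendsto_of_tendsto' h1 h2 fun n => h z hz (x n) (hxG n)
  -- (iii) → (i) : the main implication
  have main : (∃ K > (0 : ℝ), ∀ z ∈ G, ∀ w ∈ frontier G, abs (|f z| - |f w|) ≤ K * ω (dist z w)) →
      (∃ K > (0 : ℝ), ∀ z ∈ G, ∀ w ∈ G, |f z - f w| ≤ K * ω (dist z w)) := by
    rintro ⟨K, hK, hbd⟩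
    have hgrad : ∀ y ∈ G, gradNorm f y
        ≤ 16 * K * ω (infDist y (frontier G)) / infDist y (frontier G) := fun y hy =>
      grad_bound_of_boundary hω hGopen hGne hGproper hf hK hbd hy
    refine ⟨16 * K * C, by positivity, ?_⟩
    intro z hz w hw
    obtain ⟨γ, hγ0, hγ1, hγG, hγC1, hγint⟩ := hcurve z hz w hw
    set s : Set ℝ := Icc (0:ℝ) 1 with hs
    have hsu : UniqueDiffOn ℝ s := uniqueDiffOn_Icc one_pos
    set g' : ℝ → ℂ := derivWithin γ s with hg'
    set H : ℝ → ℝ := fun t => fderiv ℝ f (γ t) (g' t) with hH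
    have hγcont : ContinuousOn γ s := hγC1.continuousOn
    have hg'cont : ContinuousOn g' s := hγC1.continuousOn_derivWithin hsu le_rfl
    have hfd : ContinuousOn (fderiv ℝ f) G :=
      hf.1.continuousOn_fderiv_of_isOpen hGopen (by norm_num)
    have hHcont : ContinuousOn H s :=
      ContinuousOn.clm_apply (hfd.comp hγcont hγG) hg'cont
    have hHint : IntervalIntegrable H volume 0 1 := by
      apply ContinuousOn.intervalIntegrable
      rwa [uIcc_of_le zero_le_one]
    have hfγcont : ContinuousOn (fun t => f (γ t)) s :=
      hf.1.continuousOn.comp hγcont hγG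
    have hderiv : ∀ t ∈ Ioo (0:ℝ) 1, HasDerivAt (fun t => f (γ t)) (H t) t := by
      intro t ht
      have hnhds : s ∈ nhds t := Icc_mem_nhds ht.1 ht.2
      have hγdiff : DifferentiableAt ℝ γ t :=
        ((hγC1.differentiableOn one_ne_zero) t (Ioo_subset_Icc_self ht)).differentiableAt hnhds
      have hg'eq : g' t = deriv γ t := derivWithin_of_mem_nhds hnhds
      have hfdiff : HasFDerivAt f (fderiv ℝ f (γ t)) (γ t) :=
        (((hf.1.differentiableOn (by norm_num)) _
          (hγG t (Ioo_subset_Icc_self ht))).differentiableAt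
            (hGopen.mem_nhds (hγG t (Ioo_subset_Icc_self ht)))).hasFDerivAt
      have := hfdiff.comp_hasDerivAt t hγdiff.hasDerivAt
      rw [hH]
      simp only [hg'eq]
      exact this
    have hFTC : ∫ t in (0:ℝ)..1, H t = f (γ 1) - f (γ 0) :=
      intervalIntegral.integral_eq_sub_of_hasDeriv_right_of_le zero_le_one
        hfγcont
        (fun t ht => (hderiv t ht).hasDerivWithinAt) hHint
    -- pointwise bound
    set ψ : ℝ → ℝ := fun t => ω (infDist (γ t) (frontier G)) / infDist (γ t) (frontier G)
      * ‖g' t‖ with hψ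
    have hdd : ∀ t ∈ s, 0 < infDist (γ t) (frontier G) := fun t ht =>
      infDist_frontier_pos hGopen hGne hGproper (hγG t ht)
    have hψcont : ContinuousOn ψ s := by
      apply ContinuousOn.mul
      · apply ContinuousOn.div
        · exact hω.1.comp ((continuous_infDist_pt (frontier G)).comp_continuousOn hγcont)
            (fun t ht => mem_Ici.2 infDist_nonneg)
        · exact (continuous_infDist_pt (frontier G)).comp_continuousOn hγcont
        · exact fun t ht => (hdd t ht).ne'
      · exact hg'cont.norm
    have hptwise : ∀ t ∈ s, |H t| ≤ 16 * K * ψ t := by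
      intro t ht
      have h1 : |H t| ≤ gradNorm f (γ t) * ‖g' t‖ := fderiv_le_gradNorm f (γ t) (g' t)
      have h2 : gradNorm f (γ t) * ‖g' t‖
          ≤ (16 * K * ω (infDist (γ t) (frontier G)) / infDist (γ t) (frontier G)) * ‖g' t‖ :=
        mul_le_mul_of_nonneg_right (hgrad (γ t) (hγG t ht)) (norm_nonneg _)
      refine h1.trans (h2.trans ?_)
      rw [hψ]
      ring_nf
      exact le_refl _
    -- compare with the curve integral
    have hψint : IntervalIntegrable ψ volume 0 1 := by
      apply ContinuousOn.intervalIntegrable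
      rwa [uIcc_of_le zero_le_one]
    have hint1 : |∫ t in (0:ℝ)..1, H t| ≤ ∫ t in (0:ℝ)..1, |H t| := by
      simpa [Real.norm_eq_abs] using
        intervalIntegral.norm_integral_le_integral_norm (f := H) (a := (0:ℝ)) (b := 1)
          zero_le_one
    have hint2 : (∫ t in (0:ℝ)..1, |H t|) ≤ ∫ t in (0:ℝ)..1, 16 * K * ψ t := by
      apply intervalIntegral.integral_mono_on zero_le_one
      · apply ContinuousOn.intervalIntegrable
        rw [uIcc_of_le zero_le_one]; exact hHcont.abs
      · apply IntervalIntegrable.const_mul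
        exact hψint
      · exact hptwise
    have hint3 : (∫ t in (0:ℝ)..1, 16 * K * ψ t) = 16 * K * ∫ t in (0:ℝ)..1, ψ t := by
      exact intervalIntegral.integral_const_mul _ _
    -- ∫ ψ = curve integral (they agree a.e.)
    have hae : (∫ t in (0:ℝ)..1, ψ t) = ∫ t in (0:ℝ)..1,
        ω (infDist (γ t) (frontier G)) / infDist (γ t) (frontier G) * ‖deriv γ t‖ := by
      apply intervalIntegral.integral_congr_ae
      have h1 : ∀ᵐ (t : ℝ) ∂volume, t ≠ 1 := by
        rw [MeasureTheory.ae_iff]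
        convert Real.volume_singleton (a := 1) using 2
        ext x; simp
      filter_upwards [h1] with t ht1 htmem
      have htIoc : t ∈ Ioc (0:ℝ) 1 := by rwa [Set.uIoc_of_le zero_le_one] at htmem
      have htIoo : t ∈ Ioo (0:ℝ) 1 := ⟨htIoc.1, lt_of_le_of_ne htIoc.2 ht1⟩
      have hnhds : s ∈ nhds t := Icc_mem_nhds htIoo.1 htIoo.2
      have hg'eq : g' t = deriv γ t := derivWithin_of_mem_nhds hnhds
      rw [hψ]
      simp only [hg'eq]
    have hfinal : |f z - f w| ≤ 16 * K * (C * ω (dist z w)) := by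
      have h0 : |f z - f w| = |∫ t in (0:ℝ)..1, H t| := by
        rw [hFTC, hγ0, hγ1, abs_sub_comm]
      rw [h0]
      refine hint1.trans (hint2.trans ?_)
      rw [hint3, hae]
      exact mul_le_mul_of_nonneg_left hγint (by positivity)
    calc |f z - f w| ≤ 16 * K * (C * ω (dist z w)) := hfinal
      _ = 16 * K * C * ω (dist z w) := by ring
  exact ⟨⟨e1, fun h2 => main (e2 h2)⟩, ⟨e2, fun h3 => e1 (main h3)⟩⟩
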